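/- Variance bound for products of bilinear forms of two independent noise matrices (Lemma D.5 part 2, with explicit constant). Let n >= 2 and let W = (w_{i,l}) and W' = (w'_{i,l}) be two independent n x n symmetric random matrices with zero diagonal, each with jointly independent, mean-zero upper-triangular entries satisfying Var(w_{i,l}) <= 1/n and Var(w'_{i,l}) <= 1/n. Let b_1, ..., b_n in R^n be deterministic vectors with ||b_j||_infty <= 1/n for every j. Then for every subset S of [n] x [n]: Var( sum_{(i,j) in S} ( e_i^T W b_j )( e_i^T W' b_j ) ) <= 3 |S| / n^3. -/

import Mathlib

open MeasureTheory ProbabilityTheory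

namespace VPB

variable {n : ℕ}

/-- Canonical upper-triangular index of an off-diagonal pair. -/
def pidx (i l : Fin n) (h : i ≠ l) : {p : Fin n × Fin n // p.1 < p.2} :=
  if h' : i < l then ⟨(i, l), h'⟩ else ⟨(l, i), h.lt_or_gt.resolve_left h'⟩

lemma pidx_eq_same {i l l' : Fin n} (h : i ≠ l) (h' : i ≠ l')
    (he : pidx i l h = pidx i l' h') : l = l' := by
  unfold pidx at he
  split at he <;> split at he <;>
    simp only [Subtype.mk.injEq, Prod.mk.injEq] at he
  · exact he.2
  · exact absurd he.1 h'
  · exact absurd he.1.symm h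
  · exact he.1

lemma pidx_eq_diff {i l i' l' : Fin n} (h : i ≠ l) (h' : i' ≠ l') (hii : i ≠ i')
    (he : pidx i l h = pidx i' l' h') : l = i' ∧ l' = i := by
  unfold pidx at he
  split at he <;> split at he <;>
    simp only [Subtype.mk.injEq, Prod.mk.injEq] at he
  · exact absurd he.1 hii
  · exact ⟨he.2, he.1.symm⟩
  · exact ⟨he.1, he.2.symm⟩
  · exact absurd he.2 hii

lemma intmul {Ω : Type*} [MeasurableSpace Ω] {μ : Measure Ω} {f g : Ω → ℝ}
    (hf : MemLp f 2 μ) (hg : MemLp g 2 μ) : Integrable (fun ω => f ω * g ω) μ := by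
  have h : (1 : ENNReal) / 1 = 1 / 2 + 1 / 2 := by
    rw [ENNReal.div_add_div_same, one_add_one_eq_two,
      ENNReal.div_self two_ne_zero ENNReal.ofNat_ne_top, one_div_one]
  have := hg.smul (r := 1) hf
  rw [memLp_one_iff_integrable] at this
  exact this


lemma cov_bound {Ω : Type*} [MeasurableSpace Ω] (μ : Measure Ω) [IsProbabilityMeasure μ]
    {n : ℕ} (hn : 2 ≤ n)
    (g : {p : Fin n × Fin n // p.1 < p.2} → Ω → ℝ)
    (hg_indep : ∀ q q', q ≠ q' → IndepFun (g q) (g q') μ)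
    (hgL2 : ∀ q, MemLp (g q) 2 μ)
    (hgmean : ∀ q, ∫ ω, g q ω ∂μ = 0)
    (hgvar : ∀ q, variance (g q) μ ≤ 1 / n)
    (E : Fin n → Fin n → Ω → ℝ)
    (hE : ∀ a l, E a l = fun ω => if h : a = l then (0:ℝ) else g (pidx a l h) ω)
    (b : Fin n → Fin n → ℝ) (hb : ∀ j l, |b j l| ≤ 1 / n)
    (i i' j j' : Fin n) :
    |∫ ω, (∑ l, E i l ω * b j l) * (∑ l, E i' l ω * b j' l) ∂μ|
      ≤ if i = i' then 1 / (n:ℝ)^2 else 1 / (n:ℝ)^3 := by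
  have hn0 : (0:ℝ) < n := by
    have : 0 < n := by omega
    exact_mod_cast this
  have hEL2 : ∀ a l, MemLp (E a l) 2 μ := by
    intro a l
    rw [hE]
    by_cases h : a = l
    · simpa [h] using (memLp_const (0:ℝ) : MemLp (fun _ : Ω => (0:ℝ)) 2 μ)
    · simpa [h] using hgL2 (pidx a l h)
  set T : Fin n → Fin n → ℝ := fun l l' => ∫ ω, E i l ω * E i' l' ω ∂μ with hTdef
  have hTprop : ∀ l l', T l l' = 0 ∨
      ((∃ (h : i ≠ l) (h' : i' ≠ l'), pidx i l h = pidx i' l' h') ∧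
        0 ≤ T l l' ∧ T l l' ≤ 1 / n) := by
    intro l l'
    by_cases h : i = l
    · left; simp [hTdef, hE, h]
    by_cases h' : i' = l'
    · left; simp [hTdef, hE, h']
    by_cases hq : pidx i l h = pidx i' l' h'
    · right
      have hfe : (fun ω => E i l ω * E i' l' ω)
          = fun ω => (g (pidx i l h) ω) ^ 2 := by
        funext ω
        rw [hE, hE]
        simp only [dif_neg h, dif_neg h']
        rw [← hq]
        ring
      have hTeq : T l l' = ∫ ω, (g (pidx i l h) ω) ^ 2 ∂μ := by
        simp only [hTdef]
        rw [hfe]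
      refine ⟨⟨h, h', hq⟩, ?_, ?_⟩
      · rw [hTeq]
        exact integral_nonneg fun ω => sq_nonneg _
      · have hv := variance_eq_sub (hgL2 (pidx i l h))
        have hm := hgmean (pidx i l h)
        rw [hTeq]
        have : (∫ ω, (g (pidx i l h) ω) ^ 2 ∂μ)
            = variance (g (pidx i l h)) μ := by
          rw [hv]
          simp only [Pi.pow_apply]
          rw [hm]
          ring
        rw [this]
        exact hgvar _
    · left
      have hind := hg_indep _ _ hq
      have hmul := hind.integral_mul_eq_mul_integral
        (hgL2 _).aestronglyMeasurable (hgL2 _).aestronglyMeasurable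
      have hfe : (fun ω => E i l ω * E i' l' ω)
          = g (pidx i l h) * g (pidx i' l' h') := by
        funext ω
        rw [hE, hE]
        simp [dif_neg h, dif_neg h']
      simp only [hTdef]
      rw [hfe]
      rw [hmul, hgmean, hgmean, mul_zero]
  have hint : ∀ (l l' : Fin n),
      Integrable (fun ω => (E i l ω * E i' l' ω) * (b j l * b j' l')) μ :=
    fun l l' => (intmul (hEL2 i l) (hEL2 i' l')).mul_const _
  have hswap : (∫ ω, (∑ l, E i l ω * b j l) * (∑ l, E i' l ω * b j' l) ∂μ)
      = ∑ l, ∑ l', T l l' * (b j l * b j' l') := by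
    have h1 : ∀ ω : Ω, (∑ l, E i l ω * b j l) * (∑ l, E i' l ω * b j' l)
        = ∑ l, ∑ l', (E i l ω * E i' l' ω) * (b j l * b j' l') := by
      intro ω
      rw [Finset.sum_mul_sum]
      exact Finset.sum_congr rfl fun l _ => Finset.sum_congr rfl fun l' _ => by ring
    simp_rw [h1]
    rw [integral_finset_sum _ (fun l _ => integrable_finset_sum _ (fun l' _ => hint l l'))]
    refine Finset.sum_congr rfl fun l _ => ?_
    rw [integral_finset_sum _ (fun l' _ => hint l l')]
    exact Finset.sum_congr rfl fun l' _ => integral_mul_const _ _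
  rw [hswap]
  have hTabs : ∀ l l', |T l l'| ≤ 1 / n := by
    intro l l'
    rcases hTprop l l' with h0 | ⟨_, h1, h2⟩
    · rw [h0, abs_zero]; positivity
    · rw [abs_of_nonneg h1]; exact h2
  have hterm : ∀ l l', |T l l' * (b j l * b j' l')| ≤ (1/(n:ℝ)) * (1/n * (1/n)) := by
    intro l l'
    rw [abs_mul, abs_mul]
    have h1 : (0:ℝ) ≤ 1/n := by positivity
    gcongr
    · exact hTabs l l'
    · exact hb j l
    · exact hb j' l'
  by_cases hii : i = i'
  · rw [if_pos hii]
    have hzero : ∀ l l', l' ≠ l → T l l' = 0 := by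
      intro l l' hne
      rcases hTprop l l' with h0 | ⟨⟨h, h', hq⟩, _, _⟩
      · exact h0
      · exfalso
        subst hii
        exact hne (pidx_eq_same h h' hq).symm
    calc |∑ l, ∑ l', T l l' * (b j l * b j' l')|
        ≤ ∑ l, |∑ l', T l l' * (b j l * b j' l')| := Finset.abs_sum_le_sum_abs _ _
      _ ≤ ∑ l, ∑ l', |T l l' * (b j l * b j' l')| :=
          Finset.sum_le_sum fun l _ => Finset.abs_sum_le_sum_abs _ _
      _ ≤ ∑ l : Fin n, ∑ l' : Fin n, (if l' = l then 1/(n:ℝ)^3 else 0) := by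
          refine Finset.sum_le_sum fun l _ => Finset.sum_le_sum fun l' _ => ?_
          by_cases hll : l' = l
          · rw [if_pos hll]
            refine (hterm l l').trans (le_of_eq ?_)
            field_simp
          · rw [if_neg hll, hzero l l' hll, zero_mul, abs_zero]
      _ = ∑ l : Fin n, 1/(n:ℝ)^3 := by
          refine Finset.sum_congr rfl fun l _ => ?_
          simp [Finset.sum_ite_eq']
      _ = n * (1/(n:ℝ)^3) := by
          rw [Finset.sum_const, Finset.card_univ, Fintype.card_fin, nsmul_eq_mul]
      _ ≤ 1/(n:ℝ)^2 := by
          rw [mul_one_div]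
          rw [div_le_div_iff₀ (by positivity) (by positivity)]
          ring_nf
          nlinarith [hn0]
  · rw [if_neg hii]
    have hzero : ∀ l l', ¬(l = i' ∧ l' = i) → T l l' = 0 := by
      intro l l' hne
      rcases hTprop l l' with h0 | ⟨⟨h, h', hq⟩, _, _⟩
      · exact h0
      · exact absurd (pidx_eq_diff h h' hii hq) hne
    calc |∑ l, ∑ l', T l l' * (b j l * b j' l')|
        ≤ ∑ l, |∑ l', T l l' * (b j l * b j' l')| := Finset.abs_sum_le_sum_abs _ _
      _ ≤ ∑ l, ∑ l', |T l l' * (b j l * b j' l')| :=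
          Finset.sum_le_sum fun l _ => Finset.abs_sum_le_sum_abs _ _
      _ ≤ ∑ l : Fin n, ∑ l' : Fin n, (if l = i' ∧ l' = i then 1/(n:ℝ)^3 else 0) := by
          refine Finset.sum_le_sum fun l _ => Finset.sum_le_sum fun l' _ => ?_
          by_cases hll : l = i' ∧ l' = i
          · rw [if_pos hll]
            refine (hterm l l').trans (le_of_eq ?_)
            field_simp
          · rw [if_neg hll, hzero l l' hll, zero_mul, abs_zero]
      _ ≤ 1/(n:ℝ)^3 := by
          have : ∀ l : Fin n, (∑ l' : Fin n, (if l = i' ∧ l' = i then 1/(n:ℝ)^3 else 0))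
              = if l = i' then 1/(n:ℝ)^3 else 0 := by
            intro l
            by_cases hl : l = i' <;> simp [hl, Finset.sum_ite_eq']
          rw [Finset.sum_congr rfl fun l _ => this l]
          simp [Finset.sum_ite_eq']

end VPB

open VPB

/-- **Variance bound for products of bilinear forms of two independent noise matrices**
(Lemma D.5, part 2, with explicit constant).  Let `W, W'` be two independent random symmetric
`n × n` matrices with zero diagonal, each with jointly independent mean-zero upper-triangular
entries of variance at most `1/n`, and let `b₁,…,bₙ` be deterministic vectors with
`‖b_j‖_∞ ≤ 1/n`.  Then for every `S ⊆ [n] × [n]`: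
`Var(∑_{(i,j) ∈ S} (eᵢᵀ W b_j)(eᵢᵀ W' b_j)) ≤ 3 |S| / n³`. -/
theorem variance_product_bilinear
    {Ω : Type*} [MeasurableSpace Ω] (μ : Measure Ω) [IsProbabilityMeasure μ]
    (n : ℕ) (hn : 2 ≤ n) (W W' : Ω → Matrix (Fin n) (Fin n) ℝ)
    (hsymm : ∀ ω, (W ω).IsSymm ∧ (W' ω).IsSymm)
    (hdiag : ∀ ω i, W ω i i = 0 ∧ W' ω i i = 0)
    (hmeas : ∀ i j, Measurable (fun ω => W ω i j) ∧ Measurable (fun ω => W' ω i j))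
    (hindep : iIndepFun
      (fun q : {p : Fin n × Fin n // p.1 < p.2} × Bool =>
      fun ω => (if q.2 then W' ω else W ω) q.1.1.1 q.1.1.2) μ)
    (hmean : ∀ i j, (∫ ω, W ω i j ∂μ = 0) ∧ (∫ ω, W' ω i j ∂μ = 0))
    (hL2 : ∀ i j, MemLp (fun ω => W ω i j) 2 μ ∧ MemLp (fun ω => W' ω i j) 2 μ)
    (hvar : ∀ i j, variance (fun ω => W ω i j) μ ≤ 1 / n ∧
        variance (fun ω => W' ω i j) μ ≤ 1 / n)
    (b : Fin n → Fin n → ℝ) (hb : ∀ j l, |b j l| ≤ 1 / n)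
    (S : Finset (Fin n × Fin n)) :
    variance (fun ω => ∑ p ∈ S,
        (∑ l, W ω p.1 l * b p.2 l) * (∑ l, W' ω p.1 l * b p.2 l)) μ
      ≤ 3 * S.card / (n : ℝ) ^ 3 := by
  classical
  have hn0 : (0:ℝ) < n := by
    have : 0 < n := by omega
    exact_mod_cast this
  set F : {p : Fin n × Fin n // p.1 < p.2} × Bool → Ω → ℝ :=
    fun q => fun ω => (if q.2 then W' ω else W ω) q.1.1.1 q.1.1.2 with hF
  have hFW : ∀ q ω, F (q, false) ω = W ω q.1.1 q.1.2 := by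
    intro q ω; simp [hF]
  have hFW' : ∀ q ω, F (q, true) ω = W' ω q.1.1 q.1.2 := by
    intro q ω; simp [hF]
  have hfmeas : ∀ q, Measurable (F q) := by
    rintro ⟨p, bb⟩
    cases bb
    · have := (hmeas p.1.1 p.1.2).1
      simpa [hF] using this
    · have := (hmeas p.1.1 p.1.2).2
      simpa [hF] using this
  set gW : {p : Fin n × Fin n // p.1 < p.2} → Ω → ℝ := fun q ω => W ω q.1.1 q.1.2 with hgW
  set gW' : {p : Fin n × Fin n // p.1 < p.2} → Ω → ℝ := fun q ω => W' ω q.1.1 q.1.2 with hgW'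
  have hFWeq : ∀ q, F (q, false) = gW q := fun q => funext fun ω => hFW q ω
  have hFWeq' : ∀ q, F (q, true) = gW' q := fun q => funext fun ω => hFW' q ω
  have hgWindep : ∀ q q', q ≠ q' → IndepFun (gW q) (gW q') μ := by
    intro q q' h
    have := hindep.indepFun (show (q, false) ≠ (q', false) by simpa using h)
    rwa [hFWeq, hFWeq] at this
  have hgW'indep : ∀ q q', q ≠ q' → IndepFun (gW' q) (gW' q') μ := by
    intro q q' h
    have := hindep.indepFun (show (q, true) ≠ (q', true) by simpa using h)
    rwa [hFWeq', hFWeq'] at this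
  have hEW : ∀ a l, (fun ω => W ω a l)
      = fun ω => if h : a = l then (0:ℝ) else gW (pidx a l h) ω := by
    intro a l; funext ω
    by_cases h : a = l
    · subst h; simp [(hdiag ω a).1]
    · simp only [dif_neg h]
      unfold pidx
      split
      · rfl
      · exact ((hsymm ω).1.apply l a)
  have hEW' : ∀ a l, (fun ω => W' ω a l)
      = fun ω => if h : a = l then (0:ℝ) else gW' (pidx a l h) ω := by
    intro a l; funext ω
    by_cases h : a = l
    · subst h; simp [(hdiag ω a).2]
    · simp only [dif_neg h]
      unfold pidx
      split
      · rfl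
      · exact ((hsymm ω).2.apply l a)
  have covW : ∀ p q : Fin n × Fin n,
      |∫ ω, (∑ l, W ω p.1 l * b p.2 l) * (∑ l, W ω q.1 l * b q.2 l) ∂μ|
        ≤ if p.1 = q.1 then 1 / (n:ℝ)^2 else 1 / (n:ℝ)^3 := fun p q =>
    cov_bound μ hn gW hgWindep (fun q => (hL2 q.1.1 q.1.2).1) (fun q => (hmean q.1.1 q.1.2).1)
      (fun q => (hvar q.1.1 q.1.2).1) (fun a l ω => W ω a l) hEW b hb p.1 q.1 p.2 q.2
  have covW' : ∀ p q : Fin n × Fin n,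
      |∫ ω, (∑ l, W' ω p.1 l * b p.2 l) * (∑ l, W' ω q.1 l * b q.2 l) ∂μ|
        ≤ if p.1 = q.1 then 1 / (n:ℝ)^2 else 1 / (n:ℝ)^3 := fun p q =>
    cov_bound μ hn gW' hgW'indep (fun q => (hL2 q.1.1 q.1.2).2) (fun q => (hmean q.1.1 q.1.2).2)
      (fun q => (hvar q.1.1 q.1.2).2) (fun a l ω => W' ω a l) hEW' b hb p.1 q.1 p.2 q.2
  -- independence between the W-part and the W'-part
  set Sf : Finset ({p : Fin n × Fin n // p.1 < p.2} × Bool) :=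
    Finset.univ.filter (fun q => q.2 = false) with hSf
  set St : Finset ({p : Fin n × Fin n // p.1 < p.2} × Bool) :=
    Finset.univ.filter (fun q => q.2 = true) with hSt
  have hmemf : ∀ (q : {p : Fin n × Fin n // p.1 < p.2}), (q, false) ∈ Sf := by
    intro q; simp [hSf]
  have hmemt : ∀ (q : {p : Fin n × Fin n // p.1 < p.2}), (q, true) ∈ St := by
    intro q; simp [hSt]
  have hdisj : Disjoint Sf St := by
    rw [Finset.disjoint_left]
    intro q hq hq'
    simp [hSf] at hq
    simp [hSt] at hq'
    rw [hq] at hq'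
    exact Bool.false_ne_true hq'
  have hfinsets := hindep.indepFun_finset Sf St hdisj hfmeas
  have hYZindep : ∀ p q : Fin n × Fin n,
      IndepFun (fun ω => (∑ l, W ω p.1 l * b p.2 l) * (∑ l, W ω q.1 l * b q.2 l))
        (fun ω => (∑ l, W' ω p.1 l * b p.2 l) * (∑ l, W' ω q.1 l * b q.2 l)) μ := by
    intro p q
    set entf : Fin n → Fin n → ({x // x ∈ Sf} → ℝ) → ℝ :=
      fun a l v => if h : a = l then 0 else v ⟨(pidx a l h, false), hmemf _⟩ with hentf
    set entt : Fin n → Fin n → ({x // x ∈ St} → ℝ) → ℝ :=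
      fun a l v => if h : a = l then 0 else v ⟨(pidx a l h, true), hmemt _⟩ with hentt
    have hmentf : ∀ a l, Measurable (entf a l) := by
      intro a l
      by_cases h : a = l
      · simp only [hentf, dif_pos h]; exact measurable_const
      · simp only [hentf, dif_neg h]; exact measurable_pi_apply _
    have hmentt : ∀ a l, Measurable (entt a l) := by
      intro a l
      by_cases h : a = l
      · simp only [hentt, dif_pos h]; exact measurable_const
      · simp only [hentt, dif_neg h]; exact measurable_pi_apply _
    set φ : ({x // x ∈ Sf} → ℝ) → ℝ := fun v =>
      (∑ l, entf p.1 l v * b p.2 l) * (∑ l, entf q.1 l v * b q.2 l) with hφ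
    set ψ : ({x // x ∈ St} → ℝ) → ℝ := fun v =>
      (∑ l, entt p.1 l v * b p.2 l) * (∑ l, entt q.1 l v * b q.2 l) with hψ
    have hφm : Measurable φ := by
      apply Measurable.mul <;>
        exact Finset.measurable_sum _ (fun l _ => (hmentf _ l).mul_const _)
    have hψm : Measurable ψ := by
      apply Measurable.mul <;>
        exact Finset.measurable_sum _ (fun l _ => (hmentt _ l).mul_const _)
    have hcomp := hfinsets.comp hφm hψm
    have hentW : ∀ (a l : Fin n) (ω : Ω), entf a l (fun i => F i.1 ω) = W ω a l := by
      intro a l ω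
      by_cases h : a = l
      · simp only [hentf, dif_pos h]; subst h; exact ((hdiag ω a).1).symm
      · simp only [hentf, dif_neg h]
        have h2 := congrFun (hEW a l) ω
        simp only [dif_neg h] at h2
        have h3 : F ((pidx a l h, false) : _ × Bool) ω = gW (pidx a l h) ω := hFW _ ω
        rw [h3]
        exact h2.symm
    have hentW' : ∀ (a l : Fin n) (ω : Ω), entt a l (fun i => F i.1 ω) = W' ω a l := by
      intro a l ω
      by_cases h : a = l
      · simp only [hentt, dif_pos h]; subst h; exact ((hdiag ω a).2).symm
      · simp only [hentt, dif_neg h]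
        have h2 := congrFun (hEW' a l) ω
        simp only [dif_neg h] at h2
        have h3 : F ((pidx a l h, true) : _ × Bool) ω = gW' (pidx a l h) ω := hFW' _ ω
        rw [h3]
        exact h2.symm
    have heq1 : (φ ∘ fun ω (i : {x // x ∈ Sf}) => F i.1 ω)
        = fun ω => (∑ l, W ω p.1 l * b p.2 l) * (∑ l, W ω q.1 l * b q.2 l) := by
      funext ω
      simp only [Function.comp_apply, hφ]
      congr 1 <;> exact Finset.sum_congr rfl fun l _ => by rw [hentW]
    have heq2 : (ψ ∘ fun ω (i : {x // x ∈ St}) => F i.1 ω)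
        = fun ω => (∑ l, W' ω p.1 l * b p.2 l) * (∑ l, W' ω q.1 l * b q.2 l) := by
      funext ω
      simp only [Function.comp_apply, hψ]
      congr 1 <;> exact Finset.sum_congr rfl fun l _ => by rw [hentW']
    rw [heq1, heq2] at hcomp
    exact hcomp
  -- L2 and integrability facts
  have hYL2 : ∀ p : Fin n × Fin n, MemLp (fun ω => ∑ l, W ω p.1 l * b p.2 l) 2 μ := by
    intro p
    apply memLp_finset_sum
    intro l _
    have h1 := (hL2 p.1 l).1.const_mul (b p.2 l)
    have h2 : (fun ω => W ω p.1 l * b p.2 l) = fun ω => b p.2 l * W ω p.1 l := by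
      funext ω; ring
    rw [h2]; exact h1
  have hZL2 : ∀ p : Fin n × Fin n, MemLp (fun ω => ∑ l, W' ω p.1 l * b p.2 l) 2 μ := by
    intro p
    apply memLp_finset_sum
    intro l _
    have h1 := (hL2 p.1 l).2.const_mul (b p.2 l)
    have h2 : (fun ω => W' ω p.1 l * b p.2 l) = fun ω => b p.2 l * W' ω p.1 l := by
      funext ω; ring
    rw [h2]; exact h1
  have hYYint : ∀ p q : Fin n × Fin n,
      Integrable (fun ω => (∑ l, W ω p.1 l * b p.2 l) * (∑ l, W ω q.1 l * b q.2 l)) μ :=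
    fun p q => intmul (hYL2 p) (hYL2 q)
  have hZZint : ∀ p q : Fin n × Fin n,
      Integrable (fun ω => (∑ l, W' ω p.1 l * b p.2 l) * (∑ l, W' ω q.1 l * b q.2 l)) μ :=
    fun p q => intmul (hZL2 p) (hZL2 q)
  have hprodint : ∀ p q : Fin n × Fin n, Integrable (fun ω =>
      ((∑ l, W ω p.1 l * b p.2 l) * (∑ l, W ω q.1 l * b q.2 l)) *
      ((∑ l, W' ω p.1 l * b p.2 l) * (∑ l, W' ω q.1 l * b q.2 l))) μ :=
    fun p q => (hYZindep p q).integrable_mul (hYYint p q) (hZZint p q)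
  have hfact : ∀ p q : Fin n × Fin n,
      (∫ ω, ((∑ l, W ω p.1 l * b p.2 l) * (∑ l, W ω q.1 l * b q.2 l)) *
        ((∑ l, W' ω p.1 l * b p.2 l) * (∑ l, W' ω q.1 l * b q.2 l)) ∂μ)
      = (∫ ω, (∑ l, W ω p.1 l * b p.2 l) * (∑ l, W ω q.1 l * b q.2 l) ∂μ) *
        (∫ ω, (∑ l, W' ω p.1 l * b p.2 l) * (∑ l, W' ω q.1 l * b q.2 l) ∂μ) :=
    fun p q => (hYZindep p q).integral_mul_eq_mul_integral (hYYint p q).aestronglyMeasurable (hZZint p q).aestronglyMeasurable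
  -- the random variable
  set X : Ω → ℝ := fun ω => ∑ p ∈ S,
      (∑ l, W ω p.1 l * b p.2 l) * (∑ l, W' ω p.1 l * b p.2 l) with hX
  have hXmeas : Measurable X := by
    apply Finset.measurable_sum
    intro p _
    exact (Finset.measurable_sum _ fun l _ => (hmeas p.1 l).1.mul_const _).mul
      (Finset.measurable_sum _ fun l _ => (hmeas p.1 l).2.mul_const _)
  have h1 : variance X μ ≤ μ[X ^ 2] := variance_le_expectation_sq hXmeas.aestronglyMeasurable
  have hXsq : ∀ ω, (X ω)^2 = ∑ p ∈ S, ∑ q ∈ S,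
      ((∑ l, W ω p.1 l * b p.2 l) * (∑ l, W ω q.1 l * b q.2 l)) *
      ((∑ l, W' ω p.1 l * b p.2 l) * (∑ l, W' ω q.1 l * b q.2 l)) := by
    intro ω
    simp only [hX]
    rw [sq, Finset.sum_mul_sum]
    exact Finset.sum_congr rfl fun p _ => Finset.sum_congr rfl fun q _ => by ring
  have h2 : μ[X ^ 2] = ∑ p ∈ S, ∑ q ∈ S,
      (∫ ω, (∑ l, W ω p.1 l * b p.2 l) * (∑ l, W ω q.1 l * b q.2 l) ∂μ) *
      (∫ ω, (∑ l, W' ω p.1 l * b p.2 l) * (∑ l, W' ω q.1 l * b q.2 l) ∂μ) := by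
    have hpow : μ[X ^ 2] = ∫ ω, (X ω)^2 ∂μ := by simp [Pi.pow_apply]
    rw [hpow]
    simp_rw [hXsq]
    rw [integral_finset_sum _ (fun p _ => integrable_finset_sum _ (fun q _ => hprodint p q))]
    refine Finset.sum_congr rfl fun p _ => ?_
    rw [integral_finset_sum _ (fun q _ => hprodint p q)]
    exact Finset.sum_congr rfl fun q _ => hfact p q
  have hD : ∀ p q : Fin n × Fin n,
      (∫ ω, (∑ l, W ω p.1 l * b p.2 l) * (∑ l, W ω q.1 l * b q.2 l) ∂μ) *
      (∫ ω, (∑ l, W' ω p.1 l * b p.2 l) * (∑ l, W' ω q.1 l * b q.2 l) ∂μ)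
        ≤ (if p.1 = q.1 then 1/(n:ℝ)^4 else 1/(n:ℝ)^6) := by
    intro p q
    have hW := covW p q
    have hW' := covW' p q
    refine (le_abs_self _).trans ?_
    rw [abs_mul]
    by_cases hpq : p.1 = q.1
    · rw [if_pos hpq] at hW hW' ⊢
      calc |∫ ω, (∑ l, W ω p.1 l * b p.2 l) * (∑ l, W ω q.1 l * b q.2 l) ∂μ| *
            |∫ ω, (∑ l, W' ω p.1 l * b p.2 l) * (∑ l, W' ω q.1 l * b q.2 l) ∂μ|
          ≤ (1/(n:ℝ)^2) * (1/(n:ℝ)^2) :=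
            mul_le_mul hW hW' (abs_nonneg _) (by positivity)
        _ = 1/(n:ℝ)^4 := by ring
    · rw [if_neg hpq] at hW hW' ⊢
      calc |∫ ω, (∑ l, W ω p.1 l * b p.2 l) * (∑ l, W ω q.1 l * b q.2 l) ∂μ| *
            |∫ ω, (∑ l, W' ω p.1 l * b p.2 l) * (∑ l, W' ω q.1 l * b q.2 l) ∂μ|
          ≤ (1/(n:ℝ)^3) * (1/(n:ℝ)^3) :=
            mul_le_mul hW hW' (abs_nonneg _) (by positivity)
        _ = 1/(n:ℝ)^6 := by ring
  have hn1 : (1:ℝ) ≤ n := by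
    have : 1 ≤ n := by omega
    exact_mod_cast this
  have hrow : ∀ p : Fin n × Fin n,
      (∑ q ∈ S, (if p.1 = q.1 then 1/(n:ℝ)^4 else 1/(n:ℝ)^6)) ≤ 2/(n:ℝ)^3 := by
    intro p
    rw [← Finset.sum_filter_add_sum_filter_not S (fun q => p.1 = q.1)]
    have e1 : (∑ q ∈ S.filter (fun q => p.1 = q.1),
        (if p.1 = q.1 then 1/(n:ℝ)^4 else 1/(n:ℝ)^6))
        = ((S.filter (fun q => p.1 = q.1)).card : ℝ) * (1/(n:ℝ)^4) := by
      rw [Finset.sum_congr rfl (fun q hq => if_pos (Finset.mem_filter.mp hq).2),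
        Finset.sum_const, nsmul_eq_mul]
    have e2 : (∑ q ∈ S.filter (fun q => ¬ p.1 = q.1),
        (if p.1 = q.1 then 1/(n:ℝ)^4 else 1/(n:ℝ)^6))
        = ((S.filter (fun q => ¬ p.1 = q.1)).card : ℝ) * (1/(n:ℝ)^6) := by
      rw [Finset.sum_congr rfl (fun q hq => if_neg (Finset.mem_filter.mp hq).2),
        Finset.sum_const, nsmul_eq_mul]
    rw [e1, e2]
    have c1 : ((S.filter (fun q => p.1 = q.1)).card : ℝ) ≤ n := by
      have hsub : S.filter (fun q => p.1 = q.1) ⊆ {p.1} ×ˢ Finset.univ := by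
        intro q hq
        rcases Finset.mem_filter.mp hq with ⟨_, h2⟩
        rw [Finset.mem_product]
        exact ⟨by simp [h2.symm], Finset.mem_univ _⟩
      have hcard := Finset.card_le_card hsub
      have hc : ({p.1} ×ˢ (Finset.univ : Finset (Fin n))).card = n := by simp
      rw [hc] at hcard
      exact_mod_cast hcard
    have c2 : ((S.filter (fun q => ¬ p.1 = q.1)).card : ℝ) ≤ (n:ℝ)^2 := by
      have hcard := Finset.card_le_univ (S.filter (fun q => ¬ p.1 = q.1))
      have hc : Fintype.card (Fin n × Fin n) = n * n := by simp
      rw [hc] at hcard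
      calc ((S.filter (fun q => ¬ p.1 = q.1)).card : ℝ) ≤ ((n * n : ℕ) : ℝ) := by
            exact_mod_cast hcard
        _ = (n:ℝ)^2 := by push_cast; ring
    calc ((S.filter (fun q => p.1 = q.1)).card : ℝ) * (1/(n:ℝ)^4)
          + ((S.filter (fun q => ¬ p.1 = q.1)).card : ℝ) * (1/(n:ℝ)^6)
        ≤ (n:ℝ) * (1/(n:ℝ)^4) + (n:ℝ)^2 * (1/(n:ℝ)^6) :=
          add_le_add (mul_le_mul_of_nonneg_right c1 (by positivity))
            (mul_le_mul_of_nonneg_right c2 (by positivity))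
      _ = 1/(n:ℝ)^3 + 1/(n:ℝ)^4 := by field_simp
      _ ≤ 1/(n:ℝ)^3 + 1/(n:ℝ)^3 :=
          add_le_add le_rfl (one_div_le_one_div_of_le (by positivity)
            (pow_le_pow_right₀ hn1 (by norm_num)))
      _ = 2/(n:ℝ)^3 := by ring
  calc variance X μ ≤ μ[X ^ 2] := h1
    _ = ∑ p ∈ S, ∑ q ∈ S,
        (∫ ω, (∑ l, W ω p.1 l * b p.2 l) * (∑ l, W ω q.1 l * b q.2 l) ∂μ) *
        (∫ ω, (∑ l, W' ω p.1 l * b p.2 l) * (∑ l, W' ω q.1 l * b q.2 l) ∂μ) := h2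
    _ ≤ ∑ p ∈ S, ∑ q ∈ S, (if p.1 = q.1 then 1/(n:ℝ)^4 else 1/(n:ℝ)^6) :=
        Finset.sum_le_sum fun p _ => Finset.sum_le_sum fun q _ => hD p q
    _ ≤ ∑ _p ∈ S, 2/(n:ℝ)^3 := Finset.sum_le_sum fun p _ => hrow p
    _ = (S.card : ℝ) * (2/(n:ℝ)^3) := by rw [Finset.sum_const, nsmul_eq_mul]
    _ ≤ 3 * S.card / (n:ℝ)^3 := by
        have hc : (0:ℝ) ≤ (S.card : ℝ) := Nat.cast_nonneg _
        have hp : (0:ℝ) < (n:ℝ)^3 := by positivity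
        rw [show (S.card:ℝ) * (2/(n:ℝ)^3) = 2 * (S.card:ℝ) / (n:ℝ)^3 from by ring]
        exact (div_le_div_iff_of_pos_right hp).mpr (by linarith)
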